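/- Let q ≥ 3 and n ≥ 2. If a pair (T⁺, T⁻) of disjoint subsets of V(H(n,q)) satisfies the cylinder definition of extended perfect bitrade (Definition 5), i.e., |C_{x,i} ∩ T⁺| = |C_{x,i} ∩ T⁻| ≤ 1 for every vertex x and every coordinate i, then it satisfies the projection definition (Definition 2): T⁺ and T⁻ have code distance at least 4 and every i-projection of (T⁺, T⁻) is a perfect bitrade in H(n−1,q). -/
import Mathlib


open Finset

/-- Vertex set of the Hamming graph `H(n,q)`: `q`-ary words of length `n`. -/
abbrev HV (n q : ℕ) : Type := Fin n → ZMod q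

/-- The radius-`r` sphere around `x` in `H(n,q)`. -/
def hSphere {n q : ℕ} (x : HV n q) (r : ℕ) : Set (HV n q) := {y | hammingDist x y = r}

/-- The radius-1 ball around `x` in `H(n,q)`. -/
def hBall {n q : ℕ} (x : HV n q) : Set (HV n q) := {z | hammingDist x z ≤ 1}

/-- A code `C` has code distance at least `d`. -/
def minDistGe {n q : ℕ} (C : Set (HV n q)) (d : ℕ) : Prop :=
  ∀ x ∈ C, ∀ y ∈ C, x ≠ y → d ≤ hammingDist x y

/-- A pair of disjoint sets is a perfect bitrade in `H(n,q)` if every radius-1 ball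
meets both parts in the same number (at most 1) of vertices. -/
def isPerfectBitrade {n q : ℕ} (Tp Tm : Set (HV n q)) : Prop :=
  Disjoint Tp Tm ∧ ∀ x : HV n q,
    (hBall x ∩ Tp).ncard = (hBall x ∩ Tm).ncard ∧ (hBall x ∩ Tp).ncard ≤ 1

/-- The weight of a vertex `x` with respect to a set `A`:
`|S₀(x) ∩ A| + |S₁(x) ∩ A| + (2/n)·|S₂(x) ∩ A|`. -/
noncomputable def wt {n q : ℕ} (A : Set (HV n q)) (x : HV n q) : ℚ :=
  ((hSphere x 0 ∩ A).ncard : ℚ) + ((hSphere x 1 ∩ A).ncard : ℚ)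
    + (2 / (n : ℚ)) * ((hSphere x 2 ∩ A).ncard : ℚ)

/-- Definition 3 (weight definition of extended perfect bitrade). -/
def weightBitrade {n q : ℕ} (Tp Tm : Set (HV n q)) : Prop :=
  Disjoint Tp Tm ∧ ∀ x : HV n q, wt Tp x = wt Tm x ∧ wt Tp x ≤ 1

/-- 0-1 indicator function of a set of vertices. -/
noncomputable def chi {n q : ℕ} (T : Set (HV n q)) (x : HV n q) : ℝ :=
  Set.indicator T (fun _ => (1 : ℝ)) x

/-- The adjacency operator of `H(n,q)`: sum of `f` over the neighbours of `x`. -/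
def nbrSum {n q : ℕ} [NeZero q] {R : Type*} [AddCommMonoid R]
    (f : HV n q → R) (x : HV n q) : R :=
  ∑ y ∈ Finset.univ.filter (fun y => hammingDist x y = 1), f y

/-- The `i`-projection of a code `C ⊆ V(H(m+1,q))`. -/
def proj {m q : ℕ} (i : Fin (m + 1)) (C : Set (HV (m + 1) q)) : Set (HV m q) :=
  {x | ∃ a : ZMod q, i.insertNth a x ∈ C}

/-- Definition 2 (projection definition of extended perfect bitrade). -/
def projBitrade {m q : ℕ} (Tp Tm : Set (HV (m + 1) q)) : Prop :=
  minDistGe Tp 4 ∧ minDistGe Tm 4 ∧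
    ∀ i : Fin (m + 1),
      isPerfectBitrade (proj i Tp \ proj i Tm) (proj i Tm \ proj i Tp)

/-- `f *ᵢ ψ`, where `ψ ≡ 1`: the function `x ↦ ∑ₐ f(xᵃᵢ)` on `H(m,q)`. -/
noncomputable def projFun {m q : ℕ} [NeZero q] (i : Fin (m + 1)) (f : HV (m + 1) q → ℂ)
    (x : HV m q) : ℂ :=
  ∑ a : ZMod q, f (i.insertNth a x)

/-- The cylinder `C_{x,i} = ⋃ₐ B(x + a·eᵢ)`. -/
def cylinder {n q : ℕ} (x : HV n q) (i : Fin n) : Set (HV n q) :=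
  ⋃ a : ZMod q, hBall (Function.update x i (x i + a))

/-- Definition 5 (cylinder definition of extended perfect bitrade). -/
def cylBitrade {n q : ℕ} (Tp Tm : Set (HV n q)) : Prop :=
  ∀ (x : HV n q) (i : Fin n),
    (cylinder x i ∩ Tp).ncard = (cylinder x i ∩ Tm).ncard ∧
      (cylinder x i ∩ Tp).ncard ≤ 1

/-- The matrix `S` from Definition 1. -/
noncomputable def Smat (n q : ℕ) : Matrix (Fin 3) (Fin 3) ℝ :=
  !![0, (n : ℝ) * ((q : ℝ) - 1), 0;
     1, (q : ℝ) - 2, ((n : ℝ) - 1) * ((q : ℝ) - 1);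
     0, (n : ℝ), (n : ℝ) * ((q : ℝ) - 2)]

/-- Definition 1 (matrix definition of extended perfect bitrade), existence of the
matrix `F` with the required properties. -/
def matrixBitrade {n q : ℕ} [NeZero q] (Tp Tm : Set (HV n q)) : Prop :=
  ∃ F : HV n q → Fin 3 → ℝ,
    (∀ x, F x 0 = chi Tp x - chi Tm x) ∧
    (∀ x, ∑ k : Fin 3, F x k = 0) ∧
    (∀ x, ({k : Fin 3 | F x k ≠ 0}).ncard ≤ 2) ∧
    (∀ (x : HV n q) (j : Fin 3),
      nbrSum (fun y => F y j) x = ∑ k : Fin 3, F x k * Smat n q k j)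

/-- Definition 4 (spectral definition of extended perfect bitrade). -/
def spectralBitrade {n q : ℕ} [NeZero q] (Tp Tm : Set (HV n q)) : Prop :=
  minDistGe Tp 4 ∧ minDistGe Tm 4 ∧
    ∃ g h : HV n q → ℝ,
      (∀ x, chi Tp x - chi Tm x = g x + h x) ∧
      (∀ x, nbrSum g x = -(n : ℝ) * g x) ∧
      (∀ x, nbrSum h x = ((q : ℝ) - 2) * h x)

section AuxLemmas

variable {m q n : ℕ}

lemma hd_insertNth (i : Fin (m+1)) (a b : ZMod q) (x y : HV m q) :
    hammingDist (i.insertNth a x : HV (m+1) q) (i.insertNth b y)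
      = (if a = b then 0 else 1) + hammingDist x y := by
  have e1 : hammingDist (i.insertNth a x : HV (m+1) q) (i.insertNth b y)
      = ∑ j, if (i.insertNth a x : HV (m+1) q) j ≠ (i.insertNth b y : HV (m+1) q) j
          then 1 else 0 := by
    rw [hammingDist, Finset.card_filter]
  have e2 : hammingDist x y = ∑ j, if x j ≠ y j then 1 else 0 := by
    rw [hammingDist, Finset.card_filter]
  rw [e1, e2, Fin.sum_univ_succAbove _ i]
  simp [Fin.insertNth_apply_same, Fin.insertNth_apply_succAbove]

lemma mem_cylinder_iff (x z : HV (m+1) q) (i : Fin (m+1)) :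
    z ∈ cylinder x i ↔ hammingDist (i.removeNth x) (i.removeNth z) ≤ 1 := by
  constructor
  · rintro ⟨S, ⟨a, rfl⟩, hz⟩
    have h1 : hammingDist (Function.update x i (x i + a)) z ≤ 1 := hz
    have e : Function.update x i (x i + a) = i.insertNth (x i + a) (i.removeNth x) := by
      simp
    rw [e, ← Fin.insertNth_self_removeNth i z, hd_insertNth] at h1
    split_ifs at h1 <;> omega
  · intro hle
    refine Set.mem_iUnion.2 ⟨z i - x i, ?_⟩
    show hammingDist (Function.update x i (x i + (z i - x i))) z ≤ 1
    have e : Function.update x i (x i + (z i - x i)) = i.insertNth (z i) (i.removeNth x) := by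
      rw [← Fin.insertNth_removeNth]; ring_nf
    have h2 := hd_insertNth i (z i) (z i) (i.removeNth x) (i.removeNth z)
    rw [Fin.insertNth_self_removeNth] at h2
    rw [e, h2]
    simpa using hle

lemma hd_decomp (i : Fin (m+1)) (u v : HV (m+1) q) :
    hammingDist u v = (if u i = v i then 0 else 1)
      + hammingDist (i.removeNth u) (i.removeNth v) := by
  have h := hd_insertNth i (u i) (v i) (i.removeNth u) (i.removeNth v)
  rwa [Fin.insertNth_self_removeNth, Fin.insertNth_self_removeNth] at h

lemma hd_card (f g : HV n q) :
    hammingDist f g = (Finset.univ.filter fun k => f k ≠ g k).card := by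
  rw [hammingDist]

lemma midpoint_exists (a b : HV n q) (h : hammingDist a b ≤ 2) :
    ∃ x : HV n q, hammingDist x a ≤ 1 ∧ hammingDist x b ≤ 1 := by
  classical
  by_cases hab : hammingDist a b ≤ 1
  · exact ⟨a, by simp [hammingDist_self], hab⟩
  · have hne : a ≠ b := by
      intro hEq; subst hEq; simp [hammingDist_self] at hab
    obtain ⟨j, hj⟩ := Function.ne_iff.1 hne
    refine ⟨Function.update a j (b j), ?_, ?_⟩
    · rw [hd_card]
      calc (Finset.univ.filter fun k => Function.update a j (b j) k ≠ a k).card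
          ≤ ({j} : Finset (Fin n)).card := by
            apply Finset.card_le_card
            intro k hk
            simp only [Finset.mem_filter, Finset.mem_univ, true_and] at hk
            simp only [Finset.mem_singleton]
            by_contra hkj
            exact hk (by rw [Function.update_of_ne hkj])
        _ = 1 := Finset.card_singleton j
    · rw [hd_card]
      have hmem : j ∈ Finset.univ.filter fun k => a k ≠ b k := by
        simp [hj]
      calc (Finset.univ.filter fun k => Function.update a j (b j) k ≠ b k).card
          ≤ ((Finset.univ.filter fun k => a k ≠ b k).erase j).card := by
            apply Finset.card_le_card
            intro k hk
            simp only [Finset.mem_filter, Finset.mem_univ, true_and] at hk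
            rcases eq_or_ne k j with rfl | hkj
            · simp at hk
            · rw [Function.update_of_ne hkj] at hk
              exact Finset.mem_erase.2 ⟨hkj, by simp [hk]⟩
        _ = (Finset.univ.filter fun k => a k ≠ b k).card - 1 :=
            Finset.card_erase_of_mem hmem
        _ ≤ 1 := by rw [← hd_card]; omega

lemma minDist_of_cyl [NeZero q] (T : Set (HV (m+1) q))
    (hT : ∀ (x : HV (m+1) q) (i : Fin (m+1)), (cylinder x i ∩ T).ncard ≤ 1) :
    minDistGe T 4 := by
  intro u hu v hv huv
  by_contra hlt
  push_neg at hlt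
  obtain ⟨i, hi⟩ := Function.ne_iff.1 huv
  have hdec := hd_decomp i u v
  rw [if_neg hi] at hdec
  have hoff : hammingDist (i.removeNth u) (i.removeNth v) ≤ 2 := by omega
  obtain ⟨x, hxu, hxv⟩ := midpoint_exists _ _ hoff
  set X : HV (m+1) q := i.insertNth 0 x with hX
  have hrX : i.removeNth X = x := by rw [hX]; ext j; simp [Fin.removeNth]
  have huC : u ∈ cylinder X i ∩ T :=
    ⟨(mem_cylinder_iff X u i).2 (by rw [hrX]; exact hxu), hu⟩
  have hvC : v ∈ cylinder X i ∩ T :=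
    ⟨(mem_cylinder_iff X v i).2 (by rw [hrX]; exact hxv), hv⟩
  have h2 : 1 < (cylinder X i ∩ T).ncard :=
    (Set.one_lt_ncard (Set.toFinite _)).2 ⟨u, huC, v, hvC, huv⟩
  exact absurd (hT X i) (by omega)

lemma ball_proj [NeZero q] (i : Fin (m+1)) (T : Set (HV (m+1) q)) (x : HV m q) :
    hBall x ∩ proj i T = i.removeNth '' (cylinder (i.insertNth 0 x) i ∩ T) := by
  have hrX : i.removeNth (i.insertNth 0 x : HV (m+1) q) = x := by
    ext j; simp [Fin.removeNth]
  ext y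
  constructor
  · rintro ⟨hy, a, ha⟩
    have hry : i.removeNth (i.insertNth a y : HV (m+1) q) = y := by
      ext j; simp [Fin.removeNth]
    refine ⟨i.insertNth a y, ⟨(mem_cylinder_iff _ _ i).2 ?_, ha⟩, hry⟩
    rw [hrX, hry]
    exact hy
  · rintro ⟨z, ⟨hzc, hzT⟩, rfl⟩
    refine ⟨?_, z i, ?_⟩
    · have := (mem_cylinder_iff _ _ i).1 hzc
      rwa [hrX] at this
    · rw [Fin.insertNth_self_removeNth]; exact hzT

lemma ncard_image_of_small {α β : Type*} (f : α → β) {s : Set α} (hs : s.Finite)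
    (h : s.ncard ≤ 1) : (f '' s).ncard = s.ncard := by
  rcases (Set.ncard_le_one_iff_eq hs).1 h with rfl | ⟨a, rfl⟩
  · simp
  · simp

end AuxLemmas

/-- here `n = m + 1 ≥ 2`: the cylinder definition (Definition 5) implies
the projection definition (Definition 2). -/
theorem stmt14 (q m : ℕ) (hq : 3 ≤ q) (hm : 1 ≤ m)
    (Tp Tm : Set (HV (m + 1) q)) (hdisj : Disjoint Tp Tm)
    (h : cylBitrade Tp Tm) :
    projBitrade Tp Tm := by
  haveI : NeZero q := ⟨by omega⟩
  refine ⟨minDist_of_cyl Tp (fun x i => (h x i).2),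
    minDist_of_cyl Tm (fun x i => (h x i).1 ▸ (h x i).2), ?_⟩
  intro i
  refine ⟨disjoint_sdiff_sdiff, ?_⟩
  intro x
  set X : HV (m+1) q := i.insertNth 0 x with hX
  obtain ⟨heq, hle⟩ := h X i
  have hP : (hBall x ∩ proj i Tp).ncard = (cylinder X i ∩ Tp).ncard := by
    rw [ball_proj]; exact ncard_image_of_small _ (Set.toFinite _) hle
  have hM : (hBall x ∩ proj i Tm).ncard = (cylinder X i ∩ Tm).ncard := by
    rw [ball_proj]; exact ncard_image_of_small _ (Set.toFinite _) (heq ▸ hle)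
  set P := hBall x ∩ proj i Tp with hPdef
  set M := hBall x ∩ proj i Tm with hMdef
  have hPM : P.ncard = M.ncard := by rw [hP, hM, heq]
  have hP1 : P.ncard ≤ 1 := by rw [hP]; exact hle
  have eP : hBall x ∩ (proj i Tp \ proj i Tm) = P \ M := by
    ext y; simp only [hPdef, hMdef, Set.mem_inter_iff, Set.mem_diff]; tauto
  have eM : hBall x ∩ (proj i Tm \ proj i Tp) = M \ P := by
    ext y; simp only [hPdef, hMdef, Set.mem_inter_iff, Set.mem_diff]; tauto
  rw [eP, eM]
  rcases (Set.ncard_le_one_iff_eq (Set.toFinite _)).1 hP1 with hPe | ⟨u, hPu⟩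
  · have hM0 : M.ncard = 0 := by rw [← hPM, hPe]; simp
    have hMe : M = ∅ := (Set.ncard_eq_zero (Set.toFinite _)).1 hM0
    rw [hPe, hMe]; simp
  · have hM1 : M.ncard = 1 := by rw [← hPM, hPu]; simp
    obtain ⟨v, hMv⟩ := Set.ncard_eq_one.1 hM1
    rw [hPu, hMv]
    rcases eq_or_ne u v with rfl | huv
    · simp
    · rw [Set.diff_singleton_eq_self (by simpa using huv.symm),
        Set.diff_singleton_eq_self (by simpa using huv)]
      simp
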